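/- There exist absolute constants C < ∞ and c', c₁, C₁ > 0 with the following property. Let ω ∈ (0,1) be irrational with convergent denominators {q_k}_{k≥1}, let α ∈ (0,1], and let φ(x) = Re Σ_{k=1}^∞ q_k^{−α} e^{2πi q_k x}. If m is an integer with q_{m+1} ≥ C·m·q_m, then there is an integer N_m with c₁·q_{m+1} ≤ N_m ≤ C₁·q_{m+1} such that the Birkhoff sum of φ over the translation T_ω satisfies (1/N_m) φ^{(N_m)}(0) − ∫_T φ ≥ c' / q_m^α. -/

import Mathlib

open scoped BigOperators

noncomputable section

/-- Distance from a real number to the nearest integer, `‖t‖ = dist (t, ℤ)`. -/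
def nint (t : ℝ) : ℝ := |t - round t|

/-- The distance on the torus `ℝ/ℤ`, viewed through representatives in `ℝ`. -/
def distT (x y : ℝ) : ℝ := nint (x - y)

/-- Birkhoff sum `φ^(N)(x) = Σ_{j<N} φ(x + jω)` of `φ` over the translation by `ω`. -/
def birkhoff (φ : ℝ → ℝ) (ω : ℝ) (N : ℕ) (x : ℝ) : ℝ :=
  ∑ j ∈ Finset.range N, φ (x + (j : ℝ) * ω)

/-- Sup norm of an observable on the torus. -/
def supNorm (φ : ℝ → ℝ) : ℝ := sSup {r : ℝ | ∃ x : ℝ, r = |φ x|}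

/-- Hölder seminorm of an observable on the torus. -/
def holderSemi (α : ℝ) (φ : ℝ → ℝ) : ℝ :=
  sSup {r : ℝ | ∃ x y : ℝ, distT x y ≠ 0 ∧ r = |φ x - φ y| / distT x y ^ α}

/-- The Hölder norm `‖φ‖_α`. -/
def holderNorm (α : ℝ) (φ : ℝ → ℝ) : ℝ := supNorm φ + holderSemi α φ

/-- `φ` is `α`-Hölder continuous as a function on the torus `ℝ/ℤ`. -/
def IsHolderT (α : ℝ) (φ : ℝ → ℝ) : Prop :=
  ∃ C : ℝ, ∀ x y : ℝ, |φ x - φ y| ≤ C * distT x y ^ α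

/-- The Diophantine condition `DC(𝕋)_γ`: `‖kω‖ ≥ γ/(|k| log²(|k|+1))` for all `k ≠ 0`. -/
def DiophCond (γ ω : ℝ) : Prop :=
  ∀ k : ℤ, k ≠ 0 → nint ((k : ℝ) * ω) ≥ γ / (|(k : ℝ)| * Real.log (|(k : ℝ)| + 1) ^ 2)

/-- Iterates of the Gauss map, starting at the fractional part of `ω`. -/
def gaussIter (ω : ℝ) : ℕ → ℝ
  | 0 => Int.fract ω
  | n + 1 => Int.fract (1 / gaussIter ω n)

/-- The continued fraction partial quotient `a_{n+1}` of `ω`. -/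
def cfa (ω : ℝ) (n : ℕ) : ℕ := (⌊1 / gaussIter ω n⌋).toNat

/-- The denominators of the principal convergents of `ω`:
`q 0 = 1`, `q 1 = a 1`, `q (n+2) = a (n+2) * q (n+1) + q n`. -/
def qden (ω : ℝ) : ℕ → ℕ
  | 0 => 1
  | 1 => cfa ω 0
  | n + 2 => cfa ω (n + 1) * qden ω (n + 1) + qden ω n

/-- The `k`-th term (`k ≥ 1` corresponds to index `k+1`) of the lacunary Fourier series
`q_k^{-α} e(q_k x)`. -/
def cterm (ω α : ℝ) (k : ℕ) (x : ℝ) : ℂ :=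
  (((qden ω (k + 1) : ℝ) ^ (-α) : ℝ) : ℂ) *
    Complex.exp (2 * (Real.pi : ℂ) * Complex.I * ((qden ω (k + 1) : ℕ) : ℂ) * (x : ℂ))

/-- The lacunary Fourier series `f(x) = Σ_{k≥1} q_k^{-α} e(q_k x)`. -/
def lacSeries (ω α : ℝ) (x : ℝ) : ℂ := ∑' k : ℕ, cterm ω α k x

/-- The observable `φ(x) = Re Σ_{k≥1} q_k^{-α} e(q_k x)`. -/
def lacObs (ω α : ℝ) (x : ℝ) : ℝ := (lacSeries ω α x).re

namespace S7

variable {ω : ℝ}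

lemma gauss_mem (hω : ω ∈ Set.Ioo (0:ℝ) 1) (hirr : Irrational ω) :
    ∀ n, gaussIter ω n ∈ Set.Ioo (0:ℝ) 1 ∧ Irrational (gaussIter ω n) := by
  intro n
  induction n with
  | zero =>
    have : Int.fract ω = ω := Int.fract_eq_self.mpr ⟨hω.1.le, hω.2⟩
    rw [gaussIter, this]; exact ⟨hω, hirr⟩
  | succ n ih =>
    obtain ⟨⟨h0, h1⟩, hi⟩ := ih
    have hinv : Irrational (1 / gaussIter ω n) := by
      simpa [one_div] using hi.inv
    have hfr : Irrational (gaussIter ω (n+1)) := by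
      show Irrational (Int.fract (1 / gaussIter ω n))
      unfold Int.fract
      exact hinv.sub_intCast _
    refine ⟨⟨?_, ?_⟩, hfr⟩
    · rcases lt_or_eq_of_le (Int.fract_nonneg (1 / gaussIter ω n)) with h | h
      · exact h
      · exfalso
        have h2 : Irrational (Int.fract (1 / gaussIter ω n)) := hfr
        rw [← h] at h2
        exact h2.ne_int 0 (by norm_num)
    · exact Int.fract_lt_one _

lemma one_lt_inv_gauss (hω : ω ∈ Set.Ioo (0:ℝ) 1) (hirr : Irrational ω) (n : ℕ) :
    1 < 1 / gaussIter ω n := by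
  obtain ⟨⟨h0, h1⟩, _⟩ := gauss_mem hω hirr n
  rw [lt_div_iff₀ h0]; linarith

lemma cfa_cast (hω : ω ∈ Set.Ioo (0:ℝ) 1) (hirr : Irrational ω) (n : ℕ) :
    (cfa ω n : ℤ) = ⌊1 / gaussIter ω n⌋ := by
  have := one_lt_inv_gauss hω hirr n
  have h1 : (1:ℤ) ≤ ⌊1 / gaussIter ω n⌋ := by
    rw [Int.le_floor]; exact_mod_cast this.le
  rw [cfa, Int.toNat_of_nonneg (by linarith)]

lemma one_le_cfa (hω : ω ∈ Set.Ioo (0:ℝ) 1) (hirr : Irrational ω) (n : ℕ) :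
    1 ≤ cfa ω n := by
  have h := cfa_cast hω hirr n
  have h1 : (1:ℤ) ≤ ⌊1 / gaussIter ω n⌋ := by
    rw [Int.le_floor]; exact_mod_cast (one_lt_inv_gauss hω hirr n).le
  omega

lemma gauss_succ (hω : ω ∈ Set.Ioo (0:ℝ) 1) (hirr : Irrational ω) (n : ℕ) :
    (cfa ω n : ℝ) + gaussIter ω (n+1) = 1 / gaussIter ω n := by
  have h := cfa_cast hω hirr n
  show (cfa ω n : ℝ) + Int.fract (1 / gaussIter ω n) = 1 / gaussIter ω n
  have : ((cfa ω n : ℤ) : ℝ) = ((⌊1 / gaussIter ω n⌋ : ℤ) : ℝ) := by exact_mod_cast h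
  push_cast at this
  rw [this]
  unfold Int.fract
  ring

lemma one_le_qden (hω : ω ∈ Set.Ioo (0:ℝ) 1) (hirr : Irrational ω) :
    ∀ n, 1 ≤ qden ω n := by
  intro n
  induction n using Nat.twoStepInduction with
  | zero => simp [qden]
  | one => simpa [qden] using one_le_cfa hω hirr 0
  | more n ih1 ih2 => show 1 ≤ cfa ω (n+1) * qden ω (n+1) + qden ω n; omega

lemma qden_le_succ (hω : ω ∈ Set.Ioo (0:ℝ) 1) (hirr : Irrational ω) (n : ℕ) :
    qden ω n ≤ qden ω (n+1) := by
  cases n with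
  | zero => simpa [qden] using one_le_cfa hω hirr 0
  | succ n =>
    show qden ω (n+1) ≤ cfa ω (n+1) * qden ω (n+1) + qden ω n
    have := one_le_cfa hω hirr (n+1)
    nlinarith [one_le_qden hω hirr n, one_le_qden hω hirr (n+1)]

lemma qden_mono (hω : ω ∈ Set.Ioo (0:ℝ) 1) (hirr : Irrational ω) {a b : ℕ} (h : a ≤ b) :
    qden ω a ≤ qden ω b :=
  monotone_nat_of_le_succ (qden_le_succ hω hirr) h

lemma two_le_qden_two (hω : ω ∈ Set.Ioo (0:ℝ) 1) (hirr : Irrational ω) :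
    2 ≤ qden ω 2 := by
  show 2 ≤ cfa ω 1 * qden ω 1 + qden ω 0
  have := one_le_cfa hω hirr 1
  have h1 : 1 ≤ qden ω 1 := one_le_qden hω hirr 1
  have h0 : qden ω 0 = 1 := rfl
  nlinarith

end S7

namespace S7

def pnum (ω : ℝ) : ℕ → ℤ
  | 0 => 0
  | 1 => 1
  | n + 2 => cfa ω (n + 1) * pnum ω (n + 1) + pnum ω n

def Pb (ω : ℝ) (n : ℕ) : ℝ := ∏ i ∈ Finset.range (n+1), gaussIter ω i

variable {ω : ℝ}

lemma Pb_succ (n : ℕ) : Pb ω (n+1) = Pb ω n * gaussIter ω (n+1) :=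
  Finset.prod_range_succ _ _

lemma Pb_zero (hω : ω ∈ Set.Ioo (0:ℝ) 1) : Pb ω 0 = ω := by
  simp [Pb, gaussIter, Int.fract_eq_self.mpr ⟨hω.1.le, hω.2⟩]

lemma Pb_pos (hω : ω ∈ Set.Ioo (0:ℝ) 1) (hirr : Irrational ω) (n : ℕ) : 0 < Pb ω n :=
  Finset.prod_pos fun i _ => (gauss_mem hω hirr i).1.1

lemma Pb_succ_lt (hω : ω ∈ Set.Ioo (0:ℝ) 1) (hirr : Irrational ω) (n : ℕ) :
    Pb ω (n+1) < Pb ω n := by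
  rw [Pb_succ]
  have h := (gauss_mem hω hirr (n+1)).1
  nlinarith [Pb_pos hω hirr n, h.1, h.2]

/-- key relation: `Pb (n+2) = Pb n - cfa (n+1) * Pb (n+1)` -/
lemma Pb_rec (hω : ω ∈ Set.Ioo (0:ℝ) 1) (hirr : Irrational ω) (n : ℕ) :
    Pb ω (n+2) = Pb ω n - (cfa ω (n+1) : ℝ) * Pb ω (n+1) := by
  have hg := gauss_succ hω hirr (n+1)
  have hx := (gauss_mem hω hirr (n+1)).1.1
  rw [Pb_succ, Pb_succ]
  have : gaussIter ω (n+2) = 1 / gaussIter ω (n+1) - cfa ω (n+1) := by linarith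
  rw [this]
  field_simp

lemma err_eq (hω : ω ∈ Set.Ioo (0:ℝ) 1) (hirr : Irrational ω) :
    ∀ n, (qden ω n : ℝ) * ω - (pnum ω n : ℝ) = (-1)^n * Pb ω n := by
  intro n
  induction n using Nat.twoStepInduction with
  | zero => simp [qden, pnum, Pb_zero hω]
  | one =>
    have hg := gauss_succ hω hirr 0
    have hx0 : gaussIter ω 0 = ω := by
      simp [gaussIter, Int.fract_eq_self.mpr ⟨hω.1.le, hω.2⟩]
    rw [hx0] at hg
    have hω0 : ω ≠ 0 := ne_of_gt hω.1
    show (qden ω 1 : ℝ) * ω - (pnum ω 1 : ℝ) = (-1)^1 * Pb ω 1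
    have hq1 : (qden ω 1 : ℝ) = (cfa ω 0 : ℝ) := by norm_cast
    have hp1 : (pnum ω 1 : ℝ) = 1 := by norm_num [pnum]
    rw [hq1, hp1, Pb_succ, Pb_zero hω]
    have : (cfa ω 0 : ℝ) * ω + gaussIter ω 1 * ω = 1 := by
      have := congrArg (· * ω) hg
      simpa [add_mul, div_mul_cancel₀ (1:ℝ) hω0, inv_mul_cancel₀ hω0] using this
    linarith
  | more n ih2 ih1 =>
    -- ih2 : statement for n+1?? check order
    have hq : (qden ω (n+2) : ℝ) = (cfa ω (n+1) : ℝ) * (qden ω (n+1) : ℝ) + (qden ω n : ℝ) := by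
      show ((cfa ω (n+1) * qden ω (n+1) + qden ω n : ℕ) : ℝ) = _
      push_cast; ring
    have hp : (pnum ω (n+2) : ℝ) = (cfa ω (n+1) : ℝ) * (pnum ω (n+1) : ℝ) + (pnum ω n : ℝ) := by
      show ((cfa ω (n+1) * pnum ω (n+1) + pnum ω n : ℤ) : ℝ) = _
      push_cast; ring
    rw [hq, hp, Pb_rec hω hirr n]
    have h1 := ih1
    have h2 := ih2
    ring_nf
    ring_nf at h1 h2 ⊢
    nlinarith [h1, h2]

lemma unit_eq (hω : ω ∈ Set.Ioo (0:ℝ) 1) (hirr : Irrational ω) :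
    ∀ n, (qden ω (n+1) : ℝ) * Pb ω n + (qden ω n : ℝ) * Pb ω (n+1) = 1 := by
  intro n
  induction n with
  | zero =>
    have hg := gauss_succ hω hirr 0
    have hx0 : gaussIter ω 0 = ω := by
      simp [gaussIter, Int.fract_eq_self.mpr ⟨hω.1.le, hω.2⟩]
    rw [hx0] at hg
    have hω0 : ω ≠ 0 := ne_of_gt hω.1
    have hq1 : (qden ω 1 : ℝ) = (cfa ω 0 : ℝ) := by norm_cast
    have hq0 : (qden ω 0 : ℝ) = 1 := by norm_num [qden]
    rw [hq1, hq0, Pb_zero hω, Pb_succ, Pb_zero hω]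
    have : (cfa ω 0 : ℝ) * ω + gaussIter ω 1 * ω = 1 := by
      have := congrArg (· * ω) hg
      simpa [add_mul, div_mul_cancel₀ (1:ℝ) hω0, inv_mul_cancel₀ hω0] using this
    linarith
  | succ n ih =>
    have hq : (qden ω (n+2) : ℝ) = (cfa ω (n+1) : ℝ) * (qden ω (n+1) : ℝ) + (qden ω n : ℝ) := by
      show ((cfa ω (n+1) * qden ω (n+1) + qden ω n : ℕ) : ℝ) = _
      push_cast; ring
    rw [hq, Pb_rec hω hirr n]
    nlinarith [ih]

lemma Pb_le (hω : ω ∈ Set.Ioo (0:ℝ) 1) (hirr : Irrational ω) (n : ℕ) :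
    Pb ω n ≤ 1 / (qden ω (n+1) : ℝ) := by
  have h := unit_eq hω hirr n
  have hq1 : (0:ℝ) < (qden ω (n+1) : ℝ) := by
    exact_mod_cast Nat.lt_of_lt_of_le Nat.zero_lt_one (one_le_qden hω hirr (n+1))
  have hq0 : (0:ℝ) ≤ (qden ω n : ℝ) := by positivity
  have hP := (Pb_pos hω hirr (n+1)).le
  rw [le_div_iff₀ hq1]
  nlinarith

lemma Pb_ge (hω : ω ∈ Set.Ioo (0:ℝ) 1) (hirr : Irrational ω) (n : ℕ) :
    1 / (2 * (qden ω (n+1) : ℝ)) ≤ Pb ω n := by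
  have h := unit_eq hω hirr n
  have hq1 : (0:ℝ) < (qden ω (n+1) : ℝ) := by
    exact_mod_cast Nat.lt_of_lt_of_le Nat.zero_lt_one (one_le_qden hω hirr (n+1))
  have hqm : (qden ω n : ℝ) ≤ (qden ω (n+1) : ℝ) := by
    exact_mod_cast qden_mono hω hirr (Nat.le_succ n)
  have hlt := Pb_succ_lt hω hirr n
  have hP := Pb_pos hω hirr n
  rw [div_le_iff₀ (by positivity)]
  nlinarith

lemma sqrt2_pow_le_qden (hω : ω ∈ Set.Ioo (0:ℝ) 1) (hirr : Irrational ω) :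
    ∀ n, (Real.sqrt 2)^n ≤ (qden ω (n+1) : ℝ) := by
  intro n
  have hs2 : (0:ℝ) ≤ Real.sqrt 2 := Real.sqrt_nonneg 2
  have hsq : Real.sqrt 2 * Real.sqrt 2 = 2 := Real.mul_self_sqrt (by norm_num)
  induction n using Nat.twoStepInduction with
  | zero => simpa using (by exact_mod_cast one_le_qden hω hirr 1 : (1:ℝ) ≤ (qden ω 1 : ℝ))
  | one =>
    have h2 : (2:ℝ) ≤ (qden ω 2 : ℝ) := by exact_mod_cast two_le_qden_two hω hirr
    have : Real.sqrt 2 ≤ 2 := by nlinarith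
    simpa [pow_one] using this.trans h2
  | more n ih2 ih1 =>
    have hq : (qden ω (n+3) : ℕ) = cfa ω (n+2) * qden ω (n+2) + qden ω (n+1) := rfl
    have hgrow : 2 * (qden ω (n+1) : ℝ) ≤ (qden ω (n+3) : ℝ) := by
      have h1 : qden ω (n+1) ≤ qden ω (n+2) := qden_le_succ hω hirr (n+1)
      have h2 : 1 ≤ cfa ω (n+2) := one_le_cfa hω hirr (n+2)
      have : 2 * qden ω (n+1) ≤ qden ω (n+3) := by
        rw [hq]; nlinarith
      exact_mod_cast this
    calc (Real.sqrt 2)^(n+2) = 2 * (Real.sqrt 2)^n := by rw [pow_succ, pow_succ]; ring_nf; nlinarith [pow_nonneg hs2 n]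
    _ ≤ 2 * (qden ω (n+1) : ℝ) := by nlinarith
    _ ≤ _ := hgrow

end S7

namespace S7

open Real Complex

variable {ω α : ℝ}

/-- E t = exp(t i) -/
def E (t : ℝ) : ℂ := Complex.exp ((t:ℂ) * Complex.I)

lemma cterm_eq (k : ℕ) (x : ℝ) :
    cterm ω α k x =
      (((qden ω (k + 1) : ℝ) ^ (-α) : ℝ) : ℂ) * E (2 * π * (qden ω (k+1) : ℝ) * x) := by
  unfold cterm E
  congr 2
  push_cast
  ring

lemma abs_E (t : ℝ) : ‖E t‖ = 1 := Complex.norm_exp_ofReal_mul_I t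

lemma E_re (t : ℝ) : (E t).re = Real.cos t := Complex.exp_ofReal_mul_I_re t

lemma E_pow (t : ℝ) (n : ℕ) : (E t)^n = E (n * t) := by
  unfold E
  rw [← Complex.exp_nat_mul]
  congr 1
  push_cast
  ring

lemma E_int_add (t : ℝ) (K : ℤ) : E (t + 2 * π * K) = E t := by
  unfold E
  have : ((t + 2*π*K : ℝ) : ℂ) * Complex.I = (t:ℂ)*Complex.I + K * (2*π*Complex.I) := by
    push_cast; ring
  rw [this, Complex.exp_add, Complex.exp_int_mul_two_pi_mul_I K, mul_one]

lemma abs_E_sub_one (t : ℝ) : ‖E t - 1‖ = 2 * |Real.sin (t/2)| := by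
  have h : E t - 1 = ((Real.cos t - 1 : ℝ) : ℂ) + ((Real.sin t : ℝ):ℂ) * Complex.I := by
    unfold E
    rw [Complex.exp_mul_I, ← Complex.ofReal_cos, ← Complex.ofReal_sin]
    push_cast
    ring
  rw [h]
  rw [Complex.norm_def, Complex.normSq_add_mul_I]
  have hsin : |Real.sin (t/2)| = Real.sqrt ((1 - Real.cos t)/2) := Real.abs_sin_half t
  have h2 : (Real.cos t - 1)^2 + (Real.sin t)^2 = 4 * ((1 - Real.cos t)/2) := by
    nlinarith [Real.sin_sq_add_cos_sq t]
  rw [h2, hsin]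
  rw [show (4 : ℝ) * ((1 - Real.cos t)/2) = 2^2 * ((1-Real.cos t)/2) by ring,
    Real.sqrt_mul (by norm_num)]
  rw [Real.sqrt_sq (by norm_num)]

lemma abs_E_sub_one_le (t : ℝ) : ‖E t - 1‖ ≤ |t| := by
  rw [abs_E_sub_one]
  have := Real.abs_sin_le_abs (x := t/2)
  calc 2 * |Real.sin (t/2)| ≤ 2 * |t/2| := by linarith
  _ = |t| := by rw [abs_div, show |(2:ℝ)| = 2 from by norm_num]; ring
  
end S7

namespace S7

open Real

variable {ω α : ℝ}

lemma w_nonneg (k : ℕ) : 0 ≤ (qden ω (k+1) : ℝ) ^ (-α) :=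
  Real.rpow_nonneg (Nat.cast_nonneg _) _

lemma qden_pos_real (hω : ω ∈ Set.Ioo (0:ℝ) 1) (hirr : Irrational ω) (n : ℕ) :
    (0:ℝ) < (qden ω n : ℝ) := by
  exact_mod_cast Nat.lt_of_lt_of_le Nat.zero_lt_one (one_le_qden hω hirr n)

lemma summable_w (hω : ω ∈ Set.Ioo (0:ℝ) 1) (hirr : Irrational ω) (hα : 0 < α) :
    Summable (fun k : ℕ => (qden ω (k+1) : ℝ) ^ (-α)) := by
  have h1 : (1:ℝ) < Real.sqrt 2 := by
    rw [show (1:ℝ) = Real.sqrt 1 from (Real.sqrt_one).symm]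
    exact Real.sqrt_lt_sqrt (by norm_num) (by norm_num)
  have hr0 : (0:ℝ) ≤ Real.sqrt 2 := Real.sqrt_nonneg 2
  set r : ℝ := (Real.sqrt 2) ^ (-α) with hr
  have hrpos : 0 ≤ r := Real.rpow_nonneg hr0 _
  have hrlt : r < 1 := Real.rpow_lt_one_of_one_lt_of_neg h1 (by linarith)
  apply Summable.of_nonneg_of_le (fun k => w_nonneg k) (fun k => ?_)
    (summable_geometric_of_lt_one hrpos hrlt)
  have hq := sqrt2_pow_le_qden hω hirr k
  have hqp : (0:ℝ) < (Real.sqrt 2)^k := pow_pos (by linarith) k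
  calc (qden ω (k+1) : ℝ) ^ (-α) ≤ ((Real.sqrt 2)^k) ^ (-α) :=
        Real.rpow_le_rpow_of_nonpos hqp hq (by linarith)
  _ = r ^ k := by
        rw [← Real.rpow_natCast (Real.sqrt 2) k, ← Real.rpow_mul hr0, hr,
          ← Real.rpow_natCast ((Real.sqrt 2) ^ (-α)) k, ← Real.rpow_mul hr0]
        ring_nf

lemma abs_cterm (hω : ω ∈ Set.Ioo (0:ℝ) 1) (hirr : Irrational ω) (k : ℕ) (x : ℝ) :
    ‖cterm ω α k x‖ = (qden ω (k+1) : ℝ) ^ (-α) := by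
  rw [cterm_eq, norm_mul, abs_E, mul_one, Complex.norm_real, Real.norm_eq_abs, abs_of_nonneg (w_nonneg k)]

lemma summable_cterm (hω : ω ∈ Set.Ioo (0:ℝ) 1) (hirr : Irrational ω) (hα : 0 < α) (x : ℝ) :
    Summable (fun k : ℕ => cterm ω α k x) := by
  apply Summable.of_norm
  have : (fun k : ℕ => ‖cterm ω α k x‖) = fun k => (qden ω (k+1) : ℝ) ^ (-α) := by
    funext k; rw [abs_cterm hω hirr]
  rw [this]
  exact summable_w hω hirr hα

lemma cterm_re (k : ℕ) (x : ℝ) :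
    (cterm ω α k x).re = (qden ω (k+1) : ℝ) ^ (-α) * Real.cos (2 * π * (qden ω (k+1) : ℝ) * x) := by
  rw [cterm_eq]
  simp [Complex.mul_re, Complex.ofReal_re, Complex.ofReal_im, E_re]

lemma summable_cterm_re (hω : ω ∈ Set.Ioo (0:ℝ) 1) (hirr : Irrational ω) (hα : 0 < α) (x : ℝ) :
    Summable (fun k : ℕ => (cterm ω α k x).re) := by
  apply Summable.of_norm_bounded (summable_w hω hirr hα)
  intro k
  rw [cterm_re, Real.norm_eq_abs, abs_mul, abs_of_nonneg (w_nonneg k)]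
  have := abs_cos_le_one (2 * π * (qden ω (k+1) : ℝ) * x)
  nlinarith [w_nonneg (ω := ω) (α := α) k]

end S7

namespace S7

open Real

variable {ω α : ℝ}

/-- signed error `θ n = q_n ω - p_n`. -/
def theta (ω : ℝ) (n : ℕ) : ℝ := (-1)^n * Pb ω n

lemma theta_eq (hω : ω ∈ Set.Ioo (0:ℝ) 1) (hirr : Irrational ω) (n : ℕ) :
    (qden ω n : ℝ) * ω = (pnum ω n : ℝ) + theta ω n := by
  have := err_eq hω hirr n
  unfold theta; linarith

lemma abs_theta (hω : ω ∈ Set.Ioo (0:ℝ) 1) (hirr : Irrational ω) (n : ℕ) :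
    |theta ω n| = Pb ω n := by
  unfold theta
  rcases Nat.even_or_odd n with he | ho
  · rw [he.neg_one_pow, one_mul, abs_of_pos (Pb_pos hω hirr n)]
  · rw [ho.neg_one_pow, neg_one_mul, abs_neg, abs_of_pos (Pb_pos hω hirr n)]

/-- the cosine Birkhoff sums at frequency `q_n`. -/
def Scos (ω : ℝ) (N n : ℕ) : ℝ := ∑ j ∈ Finset.range N, Real.cos (2 * π * (j:ℝ) * theta ω n)

lemma cos_freq (hω : ω ∈ Set.Ioo (0:ℝ) 1) (hirr : Irrational ω) (n j : ℕ) :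
    Real.cos (2 * π * (qden ω n : ℝ) * ((j:ℝ) * ω)) = Real.cos (2 * π * (j:ℝ) * theta ω n) := by
  have h : 2 * π * (qden ω n : ℝ) * ((j:ℝ) * ω)
      = 2 * π * (j:ℝ) * theta ω n + ((j:ℝ) * (pnum ω n : ℝ)) * (2 * π) := by
    have h2 := theta_eq hω hirr n
    calc 2 * π * (qden ω n : ℝ) * ((j:ℝ) * ω) = 2 * π * (j:ℝ) * ((qden ω n : ℝ) * ω) := by ring
    _ = 2 * π * (j:ℝ) * ((pnum ω n : ℝ) + theta ω n) := by rw [h2]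
    _ = _ := by ring
  rw [h]
  have : ((j:ℝ) * (pnum ω n : ℝ)) = (((j : ℤ) * pnum ω n : ℤ) : ℝ) := by push_cast; ring
  rw [this, Real.cos_add_int_mul_two_pi]

/-- Positivity / main lower bound for `n ≥ m`. -/
lemma Scos_ge (hω : ω ∈ Set.Ioo (0:ℝ) 1) (hirr : Irrational ω) {m n N : ℕ}
    (hmn : m ≤ n) (hN : (N:ℝ) ≤ (qden ω (m+1) : ℝ)/8) :
    (7/10 : ℝ) * N ≤ Scos ω N n := by
  have hcos : ∀ j ∈ Finset.range N, (7/10 : ℝ) ≤ Real.cos (2 * π * (j:ℝ) * theta ω n) := by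
    intro j hj
    have hj' : (j:ℝ) < N := by exact_mod_cast Finset.mem_range.mp hj
    have hPb := Pb_le hω hirr n
    have hPpos := Pb_pos hω hirr n
    have hqmono : (qden ω (m+1) : ℝ) ≤ (qden ω (n+1) : ℝ) := by
      exact_mod_cast qden_mono hω hirr (by omega)
    have hqpos := qden_pos_real hω hirr (m+1)
    have hqpos' := qden_pos_real hω hirr (n+1)
    have habs : |2 * π * (j:ℝ) * theta ω n| ≤ π/4 := by
      rw [abs_mul, abs_theta hω hirr n]
      have h1 : |2 * π * (j:ℝ)| = 2 * π * (j:ℝ)  := by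
        rw [abs_of_nonneg]; positivity
      rw [h1]
      have h2 : Pb ω n ≤ 1 / (qden ω (m+1) : ℝ) := by
        apply hPb.trans
        apply div_le_div_of_nonneg_left (by norm_num) hqpos hqmono
      have h3 : (j:ℝ) * Pb ω n ≤ (N:ℝ) / (qden ω (m+1) : ℝ) := by
        calc (j:ℝ) * Pb ω n ≤ (N:ℝ) * (1/(qden ω (m+1):ℝ)) := by
              apply mul_le_mul hj'.le h2 hPpos.le (Nat.cast_nonneg N)
        _ = (N:ℝ) / (qden ω (m+1) : ℝ) := by ring
      have h4 : (N:ℝ)/(qden ω (m+1):ℝ) ≤ 1/8 := by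
        rw [div_le_div_iff₀ hqpos (by norm_num)]
        linarith
      have hπ : 0 < π := Real.pi_pos
      nlinarith
    have h7 : (7/10:ℝ) ≤ Real.cos (π/4) := by
      rw [Real.cos_pi_div_four]
      have h := Real.sq_sqrt (by norm_num : (0:ℝ) ≤ 2)
      have h' := Real.sqrt_nonneg 2
      nlinarith
    calc (7/10:ℝ) ≤ Real.cos (π/4) := h7
    _ ≤ Real.cos |2 * π * (j:ℝ) * theta ω n| := by
        apply Real.cos_le_cos_of_nonneg_of_le_pi (abs_nonneg _) _ habs
        have hπ := Real.pi_pos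
        linarith
    _ = Real.cos (2 * π * (j:ℝ) * theta ω n) := Real.cos_abs _
  calc (7/10:ℝ) * N = ∑ j ∈ Finset.range N, (7/10:ℝ) := by
        rw [Finset.sum_const, Finset.card_range]; ring
  _ ≤ Scos ω N n := Finset.sum_le_sum hcos

end S7

namespace S7

open Real

variable {ω α : ℝ}

lemma theta_ne_int (hω : ω ∈ Set.Ioo (0:ℝ) 1) (hirr : Irrational ω) {n : ℕ}
    (hn : 1 ≤ n) (K : ℤ) : theta ω n ≠ (K:ℝ) := by
  intro h
  have habs := abs_theta hω hirr n
  have hpos := Pb_pos hω hirr n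
  have hle : Pb ω n ≤ 1/2 := by
    have h1 := Pb_le hω hirr n
    have h2 : (2:ℝ) ≤ (qden ω (n+1) : ℝ) := by
      have : 2 ≤ qden ω (n+1) := le_trans (two_le_qden_two hω hirr) (qden_mono hω hirr (by omega))
      exact_mod_cast this
    have hq := qden_pos_real hω hirr (n+1)
    calc Pb ω n ≤ 1/(qden ω (n+1):ℝ) := h1
    _ ≤ 1/2 := by apply div_le_div_of_nonneg_left (by norm_num) (by norm_num) h2
  rw [h] at habs
  rcases eq_or_ne K 0 with h0 | h0
  · rw [h0] at habs; simp at habs; linarith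
  · have : (1:ℝ) ≤ |(K:ℝ)| := by exact_mod_cast Int.one_le_abs (by omega)
    linarith

set_option maxHeartbeats 2000000 in
lemma Scos_junk (hω : ω ∈ Set.Ioo (0:ℝ) 1) (hirr : Irrational ω) {m n b N : ℕ}
    (hn : 1 ≤ n) (hnm : n + 1 ≤ m) (hN : N = b * qden ω m) :
    |Scos ω N n| ≤ π * b * (qden ω n : ℝ) * (qden ω (n+1) : ℝ) / (qden ω (m+1) : ℝ) := by
  classical
  set t : ℝ := 2 * π * theta ω n with ht
  set z : ℂ := E t with hz
  -- Scos is the real part of a geometric sum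
  have hzj : ∀ j : ℕ, (z^j).re = Real.cos (2 * π * (j:ℝ) * theta ω n) := by
    intro j
    rw [hz, E_pow, E_re]
    congr 1
    rw [ht]; ring
  have hS : Scos ω N n = (∑ j ∈ Finset.range N, z^j).re := by
    rw [Complex.re_sum]
    unfold Scos
    exact Finset.sum_congr rfl fun j _ => (hzj j).symm
  have hz1 : z ≠ 1 := by
    intro hcontr
    rw [hz] at hcontr
    unfold E at hcontr
    rw [Complex.exp_eq_one_iff] at hcontr
    obtain ⟨K, hK⟩ := hcontr
    have : (t:ℂ) = (2*K*π : ℝ) := by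
      have hI : ((t:ℂ)) * Complex.I = ((K:ℂ) * (2*π)) * Complex.I := by
        rw [hK]; push_cast; ring
      have := mul_right_cancel₀ Complex.I_ne_zero hI
      rw [this]; push_cast; ring
    have ht2 : t = 2*K*π := by exact_mod_cast this
    apply theta_ne_int hω hirr hn K
    have h3 : 2 * π * theta ω n = 2 * (K:ℝ) * π := by rw [← ht, ht2]
    have h4 : π * (2 * theta ω n) = π * (2 * (K:ℝ)) := by linarith
    have h5 := mul_left_cancel₀ Real.pi_ne_zero h4
    linarith
  have hgeom : ∑ j ∈ Finset.range N, z^j = (z^N - 1)/(z - 1) := geom_sum_eq hz1 N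
  -- numerator bound
  have hnum : ‖z^N - 1‖ ≤ 2 * π * b * (qden ω n : ℝ) * Pb ω m := by
    set K : ℤ := (b : ℤ) * ((qden ω n : ℤ) * pnum ω m - (qden ω m : ℤ) * pnum ω n) with hKdef
    have h1 := theta_eq hω hirr n
    have h2 := theta_eq hω hirr m
    have hcross : (qden ω m : ℝ) * theta ω n = (qden ω n : ℝ) * theta ω m
        + ((qden ω n : ℝ) * (pnum ω m : ℝ) - (qden ω m : ℝ) * (pnum ω n : ℝ)) := by
      have e1 : (qden ω m : ℝ) * ((qden ω n : ℝ) * ω) = (qden ω m : ℝ) * ((pnum ω n : ℝ) + theta ω n) := by rw [h1]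
      have e2 : (qden ω n : ℝ) * ((qden ω m : ℝ) * ω) = (qden ω n : ℝ) * ((pnum ω m : ℝ) + theta ω m) := by rw [h2]
      nlinarith [e1, e2]
    have hNt : (N:ℝ) * t = 2 * π * ((b * qden ω n : ℕ) : ℝ) * theta ω m + 2 * π * (K:ℝ) := by
      calc (N:ℝ) * t = 2 * π * (b:ℝ) * ((qden ω m : ℝ) * theta ω n) := by
            rw [hN, ht]; push_cast; ring
      _ = 2 * π * (b:ℝ) * ((qden ω n : ℝ) * theta ω m
            + ((qden ω n : ℝ) * (pnum ω m : ℝ) - (qden ω m : ℝ) * (pnum ω n : ℝ))) := by rw [hcross]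
      _ = _ := by rw [hKdef]; push_cast; ring
    have hzN : z^N = E (2 * π * ((b * qden ω n : ℕ) : ℝ) * theta ω m) := by
      rw [hz, E_pow, hNt]
      exact E_int_add _ _
    rw [hzN]
    calc ‖E (2 * π * ((b * qden ω n : ℕ) : ℝ) * theta ω m) - 1‖
        ≤ |2 * π * ((b * qden ω n : ℕ) : ℝ) * theta ω m| := abs_E_sub_one_le _
    _ = 2 * π * ((b * qden ω n : ℕ) : ℝ) * Pb ω m := by
        rw [abs_mul, abs_theta hω hirr m, abs_of_nonneg (by positivity : (0:ℝ) ≤ 2 * π * ((b * qden ω n : ℕ) : ℝ))]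
    _ = 2 * π * b * (qden ω n : ℝ) * Pb ω m := by push_cast; ring
  -- denominator bound
  have hden : 2 * (2 * Pb ω n) ≤ ‖z - 1‖ := by
    have : ‖z - 1‖ = 2 * |Real.sin (t/2)| := by rw [hz]; exact abs_E_sub_one t
    rw [this, ht]
    have hhalf : (2 * π * theta ω n)/2 = π * theta ω n := by ring
    rw [hhalf]
    have hsin : |Real.sin (π * theta ω n)| = Real.sin (π * Pb ω n) := by
      rcases Nat.even_or_odd n with he | ho
      · unfold theta; rw [he.neg_one_pow, one_mul]
        rw [abs_of_nonneg]
        apply Real.sin_nonneg_of_nonneg_of_le_pi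
        · exact mul_nonneg Real.pi_pos.le (Pb_pos hω hirr n).le
        · have hle1 : Pb ω n ≤ 1 := by
            have h1 := Pb_le hω hirr n
            have h2 : (1:ℝ) ≤ (qden ω (n+1):ℝ) := by exact_mod_cast one_le_qden hω hirr (n+1)
            calc Pb ω n ≤ 1/(qden ω (n+1):ℝ) := h1
            _ ≤ 1 := by rw [div_le_one (by linarith)]; linarith
          nlinarith [Real.pi_pos]
      · unfold theta; rw [ho.neg_one_pow, neg_one_mul]
        rw [show π * -Pb ω n = -(π * Pb ω n) from by ring, Real.sin_neg, abs_neg]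
        rw [abs_of_nonneg]
        apply Real.sin_nonneg_of_nonneg_of_le_pi
        · exact mul_nonneg Real.pi_pos.le (Pb_pos hω hirr n).le
        · have hle1 : Pb ω n ≤ 1 := by
            have h1 := Pb_le hω hirr n
            have h2 : (1:ℝ) ≤ (qden ω (n+1):ℝ) := by exact_mod_cast one_le_qden hω hirr (n+1)
            calc Pb ω n ≤ 1/(qden ω (n+1):ℝ) := h1
            _ ≤ 1 := by rw [div_le_one (by linarith)]; linarith
          nlinarith [Real.pi_pos]
    rw [hsin]
    have hPble : Pb ω n ≤ 1/2 := by
      have h1 := Pb_le hω hirr n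
      have h2 : (2:ℝ) ≤ (qden ω (n+1) : ℝ) := by
        have : 2 ≤ qden ω (n+1) := le_trans (two_le_qden_two hω hirr) (qden_mono hω hirr (by omega))
        exact_mod_cast this
      calc Pb ω n ≤ 1/(qden ω (n+1):ℝ) := h1
      _ ≤ 1/2 := by apply div_le_div_of_nonneg_left (by norm_num) (by norm_num) h2
    have hJ := Real.mul_le_sin (x := π * Pb ω n)
      (mul_nonneg Real.pi_pos.le (Pb_pos hω hirr n).le)
      (by nlinarith [Real.pi_pos, Pb_pos hω hirr n])
    have hπ := Real.pi_pos
    have : 2 * Pb ω n ≤ Real.sin (π * Pb ω n) := by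
      have h2π : 2/π * (π * Pb ω n) = 2 * Pb ω n := by field_simp
      linarith [hJ, h2π ▸ hJ]
    linarith
  -- combine
  have habs : |Scos ω N n| ≤ ‖z^N - 1‖ / ‖z - 1‖ := by
    rw [hS, hgeom]
    calc |((z^N - 1)/(z-1)).re| ≤ ‖(z^N - 1)/(z-1)‖ := Complex.abs_re_le_norm _
    _ = ‖z^N - 1‖ / ‖z - 1‖ := norm_div _ _
  have hPbn := Pb_pos hω hirr n
  have hPbm_le : Pb ω m ≤ 1/(qden ω (m+1) : ℝ) := Pb_le hω hirr m
  have hPbn_ge : 1/(2 * (qden ω (n+1) : ℝ)) ≤ Pb ω n := Pb_ge hω hirr n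
  have hq1 := qden_pos_real hω hirr (n+1)
  have hqm1 := qden_pos_real hω hirr (m+1)
  have hqn := qden_pos_real hω hirr n
  have hπ := Real.pi_pos
  have hzden : (0:ℝ) < ‖z - 1‖ := by
    calc (0:ℝ) < 2 * (2 * Pb ω n) := by linarith [Pb_pos hω hirr n]
    _ ≤ _ := hden
  calc |Scos ω N n| ≤ ‖z^N - 1‖ / ‖z - 1‖ := habs
  _ ≤ (2 * π * b * (qden ω n : ℝ) * Pb ω m) / (2 * (2 * Pb ω n)) := by
      apply div_le_div₀ ?_ hnum ?_ hden
      · have := Pb_pos hω hirr m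
        positivity
      · linarith [Pb_pos hω hirr n]
  _ ≤ π * b * (qden ω n : ℝ) * (qden ω (n+1) : ℝ) / (qden ω (m+1) : ℝ) := by
      rw [div_le_div_iff₀ (by linarith [Pb_pos hω hirr n]) hqm1]
      have h1 : Pb ω m * (qden ω (m+1):ℝ) ≤ 1 := by
        rw [← le_div_iff₀ hqm1]; exact hPbm_le
      have h2 : 1 ≤ 2 * (qden ω (n+1):ℝ) * Pb ω n := by
        have := hPbn_ge
        rw [div_le_iff₀ (by positivity)] at this
        linarith [this]
      have hb0 : (0:ℝ) ≤ (b:ℝ) := Nat.cast_nonneg b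
      have hc0 : (0:ℝ) ≤ 2*π*(b:ℝ)*(qden ω n:ℝ) := by positivity
      have hA := mul_le_mul_of_nonneg_left h1 hc0
      have hB := mul_le_mul_of_nonneg_left h2 hc0
      nlinarith [hA, hB]

end S7

namespace S7

open Real

variable {ω α : ℝ}

lemma rpow_trade {a c : ℝ} (ha : 0 < a) (hac : a ≤ c) (hα1 : α ≤ 1) :
    a ^ (-α) * a ≤ c ^ (-α) * c := by
  have hc : 0 < c := lt_of_lt_of_le ha hac
  have h1 : a ^ (-α) * a = a ^ (1 - α) := by
    rw [show (1 - α) = 1 + (-α) from by ring, Real.rpow_add ha, Real.rpow_one]; ring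
  have h2 : c ^ (-α) * c = c ^ (1 - α) := by
    rw [show (1 - α) = 1 + (-α) from by ring, Real.rpow_add hc, Real.rpow_one]; ring
  rw [h1, h2]
  exact Real.rpow_le_rpow ha.le hac (by linarith)

lemma abs_Scos_le (N n : ℕ) : |Scos ω N n| ≤ (N:ℝ) := by
  unfold Scos
  calc |∑ j ∈ Finset.range N, Real.cos (2 * π * (j:ℝ) * theta ω n)|
      ≤ ∑ j ∈ Finset.range N, |Real.cos (2 * π * (j:ℝ) * theta ω n)| :=
        Finset.abs_sum_le_sum_abs _ _
  _ ≤ ∑ j ∈ Finset.range N, (1:ℝ) := Finset.sum_le_sum fun j _ => Real.abs_cos_le_one _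
  _ = (N:ℝ) := by simp

lemma birkhoff_G (hω : ω ∈ Set.Ioo (0:ℝ) 1) (hirr : Irrational ω) (hα : 0 < α) (N : ℕ) :
    birkhoff (lacObs ω α) ω N 0
      = ∑' k : ℕ, ((qden ω (k+1) : ℝ) ^ (-α)) * Scos ω N (k+1) := by
  have hb : birkhoff (lacObs ω α) ω N 0
      = ∑ j ∈ Finset.range N, ∑' k : ℕ, (cterm ω α k ((j:ℝ) * ω)).re := by
    unfold birkhoff lacObs lacSeries
    refine Finset.sum_congr rfl fun j _ => ?_
    rw [zero_add]
    exact Complex.re_tsum (summable_cterm hω hirr hα _)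
  rw [hb, ← Summable.tsum_finsetSum (fun j _ => summable_cterm_re hω hirr hα _)]
  apply tsum_congr
  intro k
  simp only [Scos, Finset.mul_sum]
  apply Finset.sum_congr rfl
  intro j _
  rw [cterm_re, cos_freq hω hirr (k+1) j]

lemma birkhoff_lower (hω : ω ∈ Set.Ioo (0:ℝ) 1) (hirr : Irrational ω)
    (hα : 0 < α) (hα1 : α ≤ 1) {m b N : ℕ} (hm : 1 ≤ m)
    (hN : N = b * qden ω m) (hN8 : (N:ℝ) ≤ (qden ω (m+1):ℝ)/8)
    (hgap : 100 * (m:ℝ) * (qden ω m : ℝ) ≤ (qden ω (m+1):ℝ)) :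
    (1/2 : ℝ) * N * (qden ω m : ℝ)^(-α) ≤ birkhoff (lacObs ω α) ω N 0 := by
  set w : ℕ → ℝ := fun k => (qden ω (k+1) : ℝ) ^ (-α) with hwdef
  set f : ℕ → ℝ := fun k => w k * Scos ω N (k+1) with hf
  have hwnn : ∀ k, 0 ≤ w k := fun k => w_nonneg k
  have hsum : Summable f := by
    apply Summable.of_norm_bounded (g := fun k => w k * (N:ℝ))
      ((summable_w hω hirr hα).mul_right _)
    intro k
    rw [hf, Real.norm_eq_abs, abs_mul, abs_of_nonneg (hwnn k)]
    exact mul_le_mul_of_nonneg_left (abs_Scos_le N (k+1)) (hwnn k)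
  rw [birkhoff_G hω hirr hα N]
  have hsplit := (Summable.sum_add_tsum_nat_add (f := f) (m-1) hsum).symm
  have hgoal_eq : ∑' k : ℕ, ((qden ω (k+1) : ℝ) ^ (-α)) * Scos ω N (k+1) = ∑' k, f k := rfl
  rw [hgoal_eq, hsplit]
  have hm11 : m - 1 + 1 = m := by omega
  have hwm : (qden ω m : ℝ)^(-α) = w (m-1) := by
    rw [hwdef]
    simp only [hm11]
  -- tail bound
  have htail : (7/10 : ℝ) * N * (qden ω m : ℝ)^(-α) ≤ ∑' k, f (k + (m-1)) := by
    have hsum' : Summable (fun k => f (k + (m-1))) := by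
      exact (summable_nat_add_iff (m-1)).mpr hsum
    have hnonneg : ∀ k : ℕ, 0 ≤ f (k + (m-1)) := by
      intro k
      apply mul_nonneg (hwnn _)
      have := Scos_ge hω hirr (m := m) (n := k + (m-1) + 1) (N := N) (by omega) hN8
      have hN0 : (0:ℝ) ≤ (7/10:ℝ) * N := by positivity
      linarith
    have h0 : (7/10 : ℝ) * N * (qden ω m : ℝ)^(-α) ≤ f (0 + (m-1)) := by
      have heq : 0 + (m-1) + 1 = m := by omega
      have hS := Scos_ge hω hirr (m := m) (n := m) (N := N) le_rfl hN8
      rw [hf]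
      simp only [zero_add]
      rw [hwm]
      have heq2 : (m-1) + 1 = m := by omega
      rw [show Scos ω N ((m-1)+1) = Scos ω N m from by rw [heq2]]
      calc (7/10 : ℝ) * N * w (m-1) = (w (m-1)) * ((7/10:ℝ) * N) := by ring
      _ ≤ (w (m-1)) * Scos ω N m := mul_le_mul_of_nonneg_left hS (hwnn _)
    exact h0.trans (Summable.le_tsum hsum' 0 fun k _ => hnonneg k)
  -- head bound
  have hqm := qden_pos_real hω hirr m
  have hqm1 := qden_pos_real hω hirr (m+1)
  have hπ4 : π ≤ 4 := Real.pi_le_four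
  have hπ0 := Real.pi_pos
  have hwm_nn : 0 ≤ (qden ω m : ℝ)^(-α) := Real.rpow_nonneg (Nat.cast_nonneg _) _
  have hhead : |∑ k ∈ Finset.range (m-1), f k| ≤ (4/100 : ℝ) * N * (qden ω m : ℝ)^(-α) := by
    set T : ℝ := π * b * ((qden ω m : ℝ)^(-α) * (qden ω m : ℝ)) * (qden ω m : ℝ) / (qden ω (m+1) : ℝ) with hT
    have hterm : ∀ k ∈ Finset.range (m-1), |f k| ≤ T := by
      intro k hk
      have hk' : k + 2 ≤ m := by
        have := Finset.mem_range.mp hk; omega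
      have hj := Scos_junk hω hirr (m := m) (n := k+1) (b := b) (N := N)
        (by omega) (by omega) hN
      rw [hf, abs_mul, abs_of_nonneg (hwnn k)]
      have hq2m : (qden ω (k+2) : ℝ) ≤ (qden ω m : ℝ) := by
        exact_mod_cast qden_mono hω hirr hk'
      have hq1m : (qden ω (k+1) : ℝ) ≤ (qden ω m : ℝ) := by
        exact_mod_cast qden_mono hω hirr (by omega)
      have hq1pos := qden_pos_real hω hirr (k+1)
      have htrade : (qden ω (k+1) : ℝ)^(-α) * (qden ω (k+1) : ℝ)
          ≤ (qden ω m : ℝ)^(-α) * (qden ω m : ℝ) := rpow_trade hq1pos hq1m hα1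
      calc w k * |Scos ω N (k+1)|
          ≤ w k * (π * b * (qden ω (k+1) : ℝ) * (qden ω (k+2) : ℝ) / (qden ω (m+1) : ℝ)) :=
            mul_le_mul_of_nonneg_left hj (hwnn k)
      _ = π * b * ((qden ω (k+1) : ℝ)^(-α) * (qden ω (k+1) : ℝ)) * (qden ω (k+2) : ℝ) / (qden ω (m+1) : ℝ) := by
            rw [hwdef]; ring
      _ ≤ T := by
            rw [hT]
            gcongr <;>
              first
                | exact mul_nonneg (Real.rpow_nonneg (Nat.cast_nonneg _) _) (Nat.cast_nonneg _)
                | skip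
    have hTnn : 0 ≤ T := by
      rw [hT]
      positivity
    have h1 : |∑ k ∈ Finset.range (m-1), f k| ≤ (m-1 : ℕ) * T := by
      calc |∑ k ∈ Finset.range (m-1), f k| ≤ ∑ k ∈ Finset.range (m-1), |f k| :=
            Finset.abs_sum_le_sum_abs _ _
      _ ≤ ∑ k ∈ Finset.range (m-1), T := Finset.sum_le_sum hterm
      _ = (m-1 : ℕ) * T := by rw [Finset.sum_const, Finset.card_range, nsmul_eq_mul]
    have h2 : ((m-1 : ℕ) : ℝ) * T ≤ (m:ℝ) * T := by
      apply mul_le_mul_of_nonneg_right _ hTnn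
      exact_mod_cast Nat.sub_le m 1
    have h3 : (m:ℝ) * T ≤ (4/100 : ℝ) * N * (qden ω m : ℝ)^(-α) := by
      rw [hT, mul_div_assoc', div_le_iff₀ hqm1]
      have hm1 : (1:ℝ) ≤ (m:ℝ) := by exact_mod_cast hm
      have hNr : (N:ℝ) = (b:ℝ) * (qden ω m : ℝ) := by rw [hN]; push_cast; ring
      have hb0 : (0:ℝ) ≤ (b:ℝ) := Nat.cast_nonneg b
      have key : (4/100 : ℝ) * N * (qden ω m : ℝ)^(-α) * (100 * (m:ℝ) * (qden ω m : ℝ))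
          ≤ (4/100 : ℝ) * N * (qden ω m : ℝ)^(-α) * (qden ω (m+1) : ℝ) := by
        apply mul_le_mul_of_nonneg_left hgap
        have hN0 : (0:ℝ) ≤ (N:ℝ) := Nat.cast_nonneg N
        positivity
      have expand : (4/100 : ℝ) * N * (qden ω m : ℝ)^(-α) * (100 * (m:ℝ) * (qden ω m : ℝ))
          = 4 * (m:ℝ) * ((b:ℝ) * ((qden ω m : ℝ)^(-α) * (qden ω m : ℝ) * (qden ω m : ℝ))) := by
        rw [hNr]; ring
      have lhs_le : (m:ℝ) * (π * (b:ℝ) * ((qden ω m : ℝ)^(-α) * (qden ω m : ℝ)) * (qden ω m : ℝ))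
          ≤ 4 * (m:ℝ) * ((b:ℝ) * ((qden ω m : ℝ)^(-α) * (qden ω m : ℝ) * (qden ω m : ℝ))) := by
        have hfac : (0:ℝ) ≤ (m:ℝ) * ((b:ℝ) * ((qden ω m : ℝ)^(-α) * (qden ω m : ℝ) * (qden ω m : ℝ))) := by
          positivity
        nlinarith [hfac]
      calc (m:ℝ) * (π * (b:ℝ) * ((qden ω m : ℝ)^(-α) * (qden ω m : ℝ)) * (qden ω m : ℝ))
          ≤ 4 * (m:ℝ) * ((b:ℝ) * ((qden ω m : ℝ)^(-α) * (qden ω m : ℝ) * (qden ω m : ℝ))) := lhs_le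
      _ = (4/100 : ℝ) * N * (qden ω m : ℝ)^(-α) * (100 * (m:ℝ) * (qden ω m : ℝ)) := expand.symm
      _ ≤ (4/100 : ℝ) * N * (qden ω m : ℝ)^(-α) * (qden ω (m+1) : ℝ) := key
    calc |∑ k ∈ Finset.range (m-1), f k| ≤ ((m-1:ℕ):ℝ) * T := h1
    _ ≤ (m:ℝ) * T := h2
    _ ≤ _ := h3
  have habs := abs_le.mp hhead
  have hN0 : (0:ℝ) ≤ (N:ℝ) := Nat.cast_nonneg N
  have : (0:ℝ) ≤ (N:ℝ) * (qden ω m : ℝ)^(-α) := by positivity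
  linarith [habs.1, htail]

end S7

namespace S7

open Real MeasureTheory
open scoped ENNReal NNReal

variable {ω α : ℝ}

lemma integral_cterm_re_zero (k : ℕ) (hq : 1 ≤ qden ω (k+1)) :
    ∫ t in Set.Ioc (0:ℝ) 1, ((qden ω (k+1) : ℝ) ^ (-α)) * Real.cos (2 * π * (qden ω (k+1) : ℝ) * t) = 0 := by
  have hc : (2 * π * (qden ω (k+1) : ℝ)) ≠ 0 := by
    have := Real.pi_pos
    have hq' : (0:ℝ) < (qden ω (k+1) : ℝ) := by exact_mod_cast hq
    positivity
  have h1 : ∫ t in Set.Ioc (0:ℝ) 1, ((qden ω (k+1) : ℝ) ^ (-α)) * Real.cos (2 * π * (qden ω (k+1) : ℝ) * t)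
      = ∫ t in (0:ℝ)..1, ((qden ω (k+1) : ℝ) ^ (-α)) * Real.cos (2 * π * (qden ω (k+1) : ℝ) * t) := by
    rw [intervalIntegral.integral_of_le (by norm_num : (0:ℝ) ≤ 1)]
  rw [h1, intervalIntegral.integral_const_mul]
  have h2 : ∫ t in (0:ℝ)..1, Real.cos (2 * π * (qden ω (k+1) : ℝ) * t) = 0 := by
    have h3 := intervalIntegral.integral_comp_mul_left (a := (0:ℝ)) (b := (1:ℝ))
      (fun x => Real.cos x) hc
    simp only [mul_zero, mul_one] at h3
    rw [h3, integral_cos]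
    have : (2 * π * (qden ω (k+1) : ℝ)) = ((2 * qden ω (k+1) : ℕ) : ℝ) * π := by push_cast; ring
    rw [this, Real.sin_nat_mul_pi, Real.sin_zero, sub_zero, smul_zero]
  rw [h2, mul_zero]

lemma integral_lacObs_zero (hω : ω ∈ Set.Ioo (0:ℝ) 1) (hirr : Irrational ω) (hα : 0 < α) :
    ∫ t in (0:ℝ)..1, lacObs ω α t = 0 := by
  have hfun : (fun t => lacObs ω α t)
      = fun t => ∑' k : ℕ, ((qden ω (k+1) : ℝ) ^ (-α)) * Real.cos (2 * π * (qden ω (k+1) : ℝ) * t) := by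
    funext t
    unfold lacObs lacSeries
    rw [Complex.re_tsum (summable_cterm hω hirr hα t)]
    exact tsum_congr fun k => cterm_re k t
  rw [intervalIntegral.integral_of_le (by norm_num : (0:ℝ) ≤ 1), hfun]
  have hF : ∀ k : ℕ, AEStronglyMeasurable
      (fun t : ℝ => ((qden ω (k+1) : ℝ) ^ (-α)) * Real.cos (2 * π * (qden ω (k+1) : ℝ) * t))
      (volume.restrict (Set.Ioc (0:ℝ) 1)) := by
    intro k
    exact ((continuous_const.mul ((Real.continuous_cos).comp (continuous_const.mul continuous_id)))).aestronglyMeasurable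
  have hbound : ∑' k : ℕ, ∫⁻ t in Set.Ioc (0:ℝ) 1,
      ‖((qden ω (k+1) : ℝ) ^ (-α)) * Real.cos (2 * π * (qden ω (k+1) : ℝ) * t)‖₊ ∂volume ≠ ⊤ := by
    have hle : ∀ k : ℕ, ∫⁻ t in Set.Ioc (0:ℝ) 1,
        ‖((qden ω (k+1) : ℝ) ^ (-α)) * Real.cos (2 * π * (qden ω (k+1) : ℝ) * t)‖₊ ∂volume
          ≤ ENNReal.ofReal ((qden ω (k+1) : ℝ) ^ (-α)) := by
      intro k
      have hpt : ∀ t : ℝ, (‖((qden ω (k+1) : ℝ) ^ (-α)) * Real.cos (2 * π * (qden ω (k+1) : ℝ) * t)‖₊ : ℝ≥0∞)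
          ≤ ENNReal.ofReal ((qden ω (k+1) : ℝ) ^ (-α)) := by
        intro t
        rw [← enorm_eq_nnnorm, ← ofReal_norm]
        apply ENNReal.ofReal_le_ofReal
        rw [Real.norm_eq_abs, abs_mul, abs_of_nonneg (w_nonneg k)]
        calc ((qden ω (k+1) : ℝ) ^ (-α)) * |Real.cos (2 * π * (qden ω (k+1) : ℝ) * t)|
            ≤ ((qden ω (k+1) : ℝ) ^ (-α)) * 1 :=
              mul_le_mul_of_nonneg_left (Real.abs_cos_le_one _) (w_nonneg k)
        _ = _ := mul_one _
      calc ∫⁻ t in Set.Ioc (0:ℝ) 1, ‖((qden ω (k+1) : ℝ) ^ (-α)) * Real.cos (2 * π * (qden ω (k+1) : ℝ) * t)‖₊ ∂volume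
          ≤ ∫⁻ _ in Set.Ioc (0:ℝ) 1, ENNReal.ofReal ((qden ω (k+1) : ℝ) ^ (-α)) ∂volume :=
            lintegral_mono fun t => hpt t
      _ = ENNReal.ofReal ((qden ω (k+1) : ℝ) ^ (-α)) * volume (Set.Ioc (0:ℝ) 1) :=
            setLIntegral_const _ _
      _ = ENNReal.ofReal ((qden ω (k+1) : ℝ) ^ (-α)) := by
            rw [Real.volume_Ioc]
            norm_num
    have hsumW : Summable (fun k : ℕ => ((qden ω (k+1) : ℝ) ^ (-α)).toNNReal) := by
      rw [← NNReal.summable_coe]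
      have : (fun k : ℕ => (((qden ω (k+1) : ℝ) ^ (-α)).toNNReal : ℝ)) = fun k => (qden ω (k+1) : ℝ) ^ (-α) := by
        funext k
        exact Real.coe_toNNReal _ (w_nonneg k)
      rw [this]
      exact summable_w hω hirr hα
    have htop : ∑' k : ℕ, ENNReal.ofReal ((qden ω (k+1) : ℝ) ^ (-α)) ≠ ⊤ := by
      have : (fun k : ℕ => ENNReal.ofReal ((qden ω (k+1) : ℝ) ^ (-α)))
          = fun k => (((qden ω (k+1) : ℝ) ^ (-α)).toNNReal : ℝ≥0∞) := by
        funext k; rfl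
      rw [this]
      exact ENNReal.tsum_coe_ne_top_iff_summable.mpr hsumW
    exact ne_top_of_le_ne_top htop (ENNReal.tsum_le_tsum hle)
  rw [MeasureTheory.integral_tsum hF hbound]
  have : ∀ k : ℕ, ∫ t in Set.Ioc (0:ℝ) 1,
      ((qden ω (k+1) : ℝ) ^ (-α)) * Real.cos (2 * π * (qden ω (k+1) : ℝ) * t) = 0 :=
    fun k => integral_cterm_re_zero k (one_le_qden hω hirr (k+1))
  simp only [this, tsum_zero]

end S7


/-- Proposition 2.2 (iii): there are absolute constants `C, c', c₁, C₁` such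
that if `q_{m+1} ≥ C m q_m`, then there is `N_m ≍ q_{m+1}` with
`(1/N_m) φ^{(N_m)}(0) − ∫ φ ≥ c'/q_m^α` for the lacunary observable `φ`. -/
theorem stmt7 :
    ∃ C c' c₁ C₁ : ℝ, 0 < C ∧ 0 < c' ∧ 0 < c₁ ∧ 0 < C₁ ∧
      ∀ (ω α : ℝ), ω ∈ Set.Ioo (0 : ℝ) 1 → Irrational ω → α ∈ Set.Ioc (0 : ℝ) 1 →
        ∀ m : ℕ, 1 ≤ m → (qden ω (m + 1) : ℝ) ≥ C * (m : ℝ) * (qden ω m : ℝ) →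
          ∃ Nm : ℕ,
            c₁ * (qden ω (m + 1) : ℝ) ≤ (Nm : ℝ) ∧ (Nm : ℝ) ≤ C₁ * (qden ω (m + 1) : ℝ) ∧
            (1 / (Nm : ℝ)) * birkhoff (lacObs ω α) ω Nm 0 - (∫ t in (0:ℝ)..1, lacObs ω α t) ≥
              c' / (qden ω m : ℝ) ^ α := by
  refine ⟨100, 1/2, 1/16, 1, by norm_num, by norm_num, by norm_num, by norm_num, ?_⟩
  intro ω α hω hirr hα m hm hgap
  have hα0 := hα.1
  have hα1 := hα.2
  set Q : ℕ := qden ω m with hQ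
  set Q1 : ℕ := qden ω (m+1) with hQ1
  have hQpos : 0 < Q := S7.one_le_qden hω hirr m
  have hQ1pos : 0 < Q1 := S7.one_le_qden hω hirr (m+1)
  have hQr : (0:ℝ) < (Q:ℝ) := by exact_mod_cast hQpos
  have hQ1r : (0:ℝ) < (Q1:ℝ) := by exact_mod_cast hQ1pos
  have hmr : (1:ℝ) ≤ (m:ℝ) := by exact_mod_cast hm
  have hgap' : 100 * (m:ℝ) * (Q:ℝ) ≤ (Q1:ℝ) := hgap
  have h100 : 100 * (Q:ℝ) ≤ (Q1:ℝ) := by nlinarith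
  have h8Q : 8 * Q ≤ Q1 := by
    have : (8 * Q : ℝ) ≤ (Q1:ℝ) := by push_cast; nlinarith
    exact_mod_cast this
  set b : ℕ := Q1 / (8 * Q) with hb
  set N : ℕ := b * Q with hNdef
  have hb1 : 1 ≤ b := by
    rw [hb]
    exact (Nat.one_le_div_iff (by omega)).mpr h8Q
  have hN8nat : 8 * N ≤ Q1 := by
    rw [hNdef, hb]
    calc 8 * (Q1 / (8*Q) * Q) = Q1 / (8*Q) * (8*Q) := by ring
    _ ≤ Q1 := Nat.div_mul_le_self _ _
  have hN8 : (N:ℝ) ≤ (Q1:ℝ)/8 := by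
    have : ((8 * N : ℕ):ℝ) ≤ (Q1:ℝ) := by exact_mod_cast hN8nat
    push_cast at this
    linarith
  have hNlow : (Q1:ℝ)/16 ≤ (N:ℝ) := by
    have hmod : Q1 < 8*Q * b + 8*Q := by
      rw [hb]
      have h1 := Nat.div_add_mod Q1 (8*Q)
      have h2 : Q1 % (8*Q) < 8*Q := Nat.mod_lt _ (by omega)
      omega
    have hmodr : (Q1:ℝ) < 8*(Q:ℝ)*(b:ℝ) + 8*(Q:ℝ) := by exact_mod_cast hmod
    have hNr : (N:ℝ) = (b:ℝ)*(Q:ℝ) := by rw [hNdef]; push_cast; ring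
    -- Q ≤ Q1/100
    have hQle : (Q:ℝ) ≤ (Q1:ℝ)/100 := by linarith
    nlinarith
  have hNpos : 0 < N := by
    rw [hNdef]; exact Nat.mul_pos (by omega) hQpos
  have hNr : (0:ℝ) < (N:ℝ) := by exact_mod_cast hNpos
  refine ⟨N, by linarith, by linarith, ?_⟩
  have hbk := S7.birkhoff_lower hω hirr hα0 hα1 hm hNdef hN8 hgap'
  have hint := S7.integral_lacObs_zero hω hirr hα0
  rw [hint, sub_zero]
  have hrw : (1/2 : ℝ) / (Q:ℝ)^α = (1/2 : ℝ) * (Q:ℝ)^(-α) := by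
    rw [Real.rpow_neg hQr.le]
    ring
  rw [hrw]
  have h1 : (1/(N:ℝ)) * ((1/2 : ℝ) * N * (Q:ℝ)^(-α)) = (1/2 : ℝ) * (Q:ℝ)^(-α) := by
    field_simp
  calc (1/2 : ℝ) * (Q:ℝ)^(-α) = (1/(N:ℝ)) * ((1/2 : ℝ) * N * (Q:ℝ)^(-α)) := h1.symm
  _ ≤ (1/(N:ℝ)) * birkhoff (lacObs ω α) ω N 0 := by
      apply mul_le_mul_of_nonneg_left hbk
      positivity
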